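/- Let P be a symmetric positive definite real n×n matrix, A a real n×n matrix, G a real n×r matrix, H₁ a real s×n matrix, and μ, η, γ_f > 0 scalars. Suppose the symmetric (n+r)×(n+r) block matrix [[AᵀP + PA + 2μP + η·γ_f²·H₁ᵀH₁, P·G], [GᵀP, −η·I_r]] is negative definite. Then for every e ∈ ℝⁿ with e ≠ 0 and every f ∈ ℝʳ with ‖f‖ ≤ γ_f·‖H₁·e‖, one has eᵀ(AᵀP + PA)e + 2·eᵀP·G·f < 0. -/

import Mathlib

open Matrix

/-- First part of the proof of Theorem 1 of the paper: if the
symmetric block matrix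
`[[AᵀP + PA + 2μP + ηγ_f²H₁ᵀH₁, PG], [GᵀP, -ηI]]` is negative definite, then
for every `e ≠ 0` and every `f` with `‖f‖ ≤ γ_f ‖H₁ e‖` (Euclidean norms),
`eᵀ(AᵀP + PA)e + 2 eᵀ P G f < 0`. -/
theorem stmt_7 (n r s : ℕ)
    (P A : Matrix (Fin n) (Fin n) ℝ) (G : Matrix (Fin n) (Fin r) ℝ)
    (H₁ : Matrix (Fin s) (Fin n) ℝ)
    (hPsymm : P.IsSymm) (hP : P.PosDef)
    (μ η γf : ℝ) (hμ : 0 < μ) (hη : 0 < η) (hγf : 0 < γf)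
    (hLMI : (-(Matrix.fromBlocks
        (Aᵀ * P + P * A + (2 * μ) • P + (η * γf ^ 2) • (H₁ᵀ * H₁))
        (P * G)
        (Gᵀ * P)
        (-(η • (1 : Matrix (Fin r) (Fin r) ℝ))))).PosDef) :
    ∀ (e : Fin n → ℝ) (f : Fin r → ℝ), e ≠ 0 →
      Real.sqrt (∑ i, f i ^ 2) ≤
        γf * Real.sqrt (∑ i, H₁.mulVec e i ^ 2) →
      e ⬝ᵥ (Aᵀ * P + P * A).mulVec e + 2 * (e ⬝ᵥ (P * G).mulVec f) < 0 := by
  intro e f he hf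
  set x : Fin n ⊕ Fin r → ℝ := Sum.elim e f with hx
  have hxne : x ≠ 0 := by
    intro h
    apply he
    funext i
    have := congrFun h (Sum.inl i)
    simpa [hx] using this
  have hlt := hLMI.dotProduct_mulVec_pos hxne
  rw [neg_mulVec, dotProduct_neg, lt_neg, neg_zero, hx, fromBlocks_mulVec] at hlt
  simp only [star_trivial, Sum.elim_comp_inl, Sum.elim_comp_inr,
    sumElim_dotProduct_sumElim] at hlt
  have hPG : f ⬝ᵥ (Gᵀ * P) *ᵥ e = e ⬝ᵥ (P * G) *ᵥ f := by
    have h1 : (P * G)ᵀ = Gᵀ * P := by rw [transpose_mul, hPsymm.eq]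
    rw [← h1, dotProduct_mulVec, vecMul_transpose, dotProduct_comm]
  have hH : e ⬝ᵥ (H₁ᵀ * H₁) *ᵥ e = (H₁ *ᵥ e) ⬝ᵥ (H₁ *ᵥ e) := by
    rw [← mulVec_mulVec, dotProduct_mulVec, vecMul_transpose]
  have hffval : ∑ i, f i ^ 2 = f ⬝ᵥ f := by simp [dotProduct, sq]
  have hhval : ∑ i, H₁.mulVec e i ^ 2 = (H₁ *ᵥ e) ⬝ᵥ (H₁ *ᵥ e) := by
    simp [dotProduct, sq]
  have hffnn : (0:ℝ) ≤ ∑ i, f i ^ 2 := by positivity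
  have hhnn : (0:ℝ) ≤ ∑ i, H₁.mulVec e i ^ 2 := by positivity
  have hf2 : f ⬝ᵥ f ≤ γf ^ 2 * ((H₁ *ᵥ e) ⬝ᵥ (H₁ *ᵥ e)) := by
    have := mul_self_le_mul_self (Real.sqrt_nonneg (∑ i, f i ^ 2)) hf
    rw [Real.mul_self_sqrt hffnn] at this
    calc f ⬝ᵥ f = ∑ i, f i ^ 2 := hffval.symm
      _ ≤ γf * Real.sqrt (∑ i, H₁.mulVec e i ^ 2) *
          (γf * Real.sqrt (∑ i, H₁.mulVec e i ^ 2)) := this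
      _ = γf ^ 2 * ((H₁ *ᵥ e) ⬝ᵥ (H₁ *ᵥ e)) := by
          rw [← hhval]; ring_nf
          rw [Real.sq_sqrt hhnn]
  have hPe : 0 < e ⬝ᵥ P *ᵥ e := hP.dotProduct_mulVec_pos he
  simp only [add_mulVec, dotProduct_add, smul_mulVec, dotProduct_smul,
    neg_mulVec, dotProduct_neg, one_mulVec, smul_eq_mul, hPG, hH] at hlt ⊢
  nlinarith [hlt, hf2, hPe, hη.le, sq_nonneg γf]
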